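/- Let w be an extended affine permutation, X ⊆ [1,n], and suppose w restricted to X + nℤ is a channel of w with image values much larger than the values w(y) for y ∉ X (specifically w(y) + n² < w(x) for all x ∈ X, y ∈ [1,n]−X). If v is another such extended affine permutation with the same X satisfying the same hypotheses, and the relative orders of the multisets {v(i·n + x)}_{i∈[0,n−1], x∈X} and {w(i·n + x)}_{i∈[0,n−1], x∈X} coincide, and sgn_𝔔(v restricted to [1,n]−X) = sgn_𝔔(w restricted to [1,n]−X), then sgn_𝔔(v) = sgn_𝔔(w). -/

import Mathlib

/-- One step of Blasiak's sign insertion, acting on states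
`(counter, 𝔓, 𝔔, remaining word)`. -/
def signStep (n : ℕ) : ℤ × List ℤ × List ℤ × List ℤ → ℤ × List ℤ × List ℤ × List ℤ
  | (c, P, Q, []) => (c, P, Q, [])
  | (c, P, Q, a :: w) =>
    if ∀ p ∈ P, p < a then (c + 1, P ++ [a], Q ++ [c + 1], w)
    else
      match P.find? (fun p => decide (a < p)) with
      | some b => (c + 1, P.map (fun x => if x = b then a else x), Q, w ++ [(n : ℤ) + b])
      | none => (c, P, Q, [])

/-- `sgn_𝔔` agreement, relationally: whenever the sign insertions of the input
words `l₁` and `l₂` terminate, the final recording words `𝔔` agree. -/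
def SgnQEq (n : ℕ) (l₁ l₂ : List ℤ) : Prop :=
  ∀ N M : ℕ,
    ((signStep n)^[N] ((0 : ℤ), [], [], l₁)).2.2.2 = [] →
    ((signStep n)^[M] ((0 : ℤ), [], [], l₂)).2.2.2 = [] →
    ((signStep n)^[N] ((0 : ℤ), [], [], l₁)).2.2.1 =
      ((signStep n)^[M] ((0 : ℤ), [], [], l₂)).2.2.1

/-- A stream (for period `n`). -/
def IsStream (n : ℕ) (S : Set (ℤ × ℤ)) : Prop :=
  (∀ b : ℤ × ℤ, b ∈ S ↔ (b.1 + n, b.2 + n) ∈ S) ∧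
  (∀ b b' : ℤ × ℤ, b ∈ S → b' ∈ S → b.1 < b'.1 → b.2 < b'.2) ∧
  (∀ b b' : ℤ × ℤ, b ∈ S → b' ∈ S → b.1 = b'.1 → b = b')

/-- The density of a stream. -/
noncomputable def streamDensity (n : ℕ) (S : Set (ℤ × ℤ)) : ℕ :=
  Set.ncard {x : ℤ | 1 ≤ x ∧ x ≤ n ∧ ∃ y : ℤ, (x, y) ∈ S}

/-- A channel of `W`: a stream contained in `W` of maximal density. -/
def IsChannel (n : ℕ) (W C : Set (ℤ × ℤ)) : Prop :=
  IsStream n C ∧ C ⊆ W ∧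
  ∀ S : Set (ℤ × ℤ), IsStream n S → S ⊆ W → streamDensity n S ≤ streamDensity n C

/-- The restriction of an extended affine permutation `u` to positions
`X + nℤ`, as a set of balls. -/
def restrictedGraph (n : ℕ) (u : ℤ → ℤ) (X : Finset ℤ) : Set (ℤ × ℤ) :=
  {p : ℤ × ℤ | u p.1 = p.2 ∧ ∃ x ∈ X, ∃ k : ℤ, p.1 = x + k * n}

/-- The window word of `u` restricted to positions in `Y ⊆ [1, n]`. -/
noncomputable def windowWord (n : ℕ) (Y : Finset ℤ) (u : ℤ → ℤ) : List ℤ :=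
  (((Finset.Icc (1 : ℤ) (n : ℤ)).sort (· ≤ ·)).filter (fun y => decide (y ∈ Y))).map u

abbrev StT := ℤ × List ℤ × List ℤ × List ℤ

section helpers
variable {α : Type*} {R : α → α → Prop}

lemma pairwise_middle_congr (hsymm : Symmetric R) {l₁ l₂ : List α} {b b' : α}
    (hbb : ∀ x, R b x ↔ R b' x) (h : (l₁ ++ b :: l₂).Pairwise R) :
    (l₁ ++ b' :: l₂).Pairwise R := by
  rw [List.pairwise_append, List.pairwise_cons] at h ⊢
  obtain ⟨h₁, ⟨h₂, h₃⟩, h₄⟩ := h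
  refine ⟨h₁, ⟨fun y hy => (hbb y).1 (h₂ y hy), h₃⟩, ?_⟩
  intro x hx y hy
  rcases List.mem_cons.1 hy with rfl | hy
  · exact hsymm ((hbb x).1 (hsymm (h₄ x hx b (List.mem_cons_self))))
  · exact h₄ x hx y (List.mem_cons_of_mem _ hy)

lemma perm_shuffle (l₁ l₂ l₃ : List α) (a b : α) :
    ((l₁ ++ a :: l₂) ++ (l₃ ++ [b])).Perm (l₁ ++ b :: (l₂ ++ a :: l₃)) := by
  rw [← Multiset.coe_eq_coe]
  simp only [← Multiset.cons_coe, ← Multiset.coe_add, ← Multiset.singleton_add]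
  abel

end helpers

lemma find?_decomp {α} (p : α → Bool) : ∀ (l : List α) (b : α), l.find? p = some b →
    ∃ l₁ l₂, l = l₁ ++ b :: l₂ ∧ ∀ x ∈ l₁, ¬ p x
  | [], b => by simp
  | a :: l, b => by
    by_cases ha : p a
    · rw [List.find?_cons_of_pos ha]
      rintro ⟨rfl⟩
      exact ⟨[], l, rfl, by simp⟩
    · rw [List.find?_cons_of_neg ha]
      intro h
      obtain ⟨l₁, l₂, rfl, hl₁⟩ := find?_decomp p l b h
      exact ⟨a :: l₁, l₂, rfl, by
        intro x hx
        rcases List.mem_cons.1 hx with rfl | hx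
        · simpa using ha
        · exact hl₁ x hx⟩

/-- invariant for a run -/
structure RInv (n : ℕ) (M : ℤ) (L : ℕ) (s : StT) : Prop where
  res : (s.2.1 ++ s.2.2.2).Pairwise (fun x y : ℤ => (x : ZMod n) ≠ (y : ZMod n))
  len : s.2.1.length + s.2.2.2.length = L
  growth : ∀ z ∈ s.2.1 ++ s.2.2.2, z ≤ M + (s.2.1.countP (fun p => decide (p < z))) * n

lemma cast_add_n (n : ℕ) (b : ℤ) : (((n : ℤ) + b : ℤ) : ZMod n) = (b : ZMod n) := by
  push_cast
  simp

lemma RInv.step (n : ℕ) (M : ℤ) (L : ℕ) (s : StT) (h : RInv n M L s) :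
    RInv n M L (signStep n s) := by
  obtain ⟨c, P, Q, w⟩ := s
  obtain ⟨res, len, growth⟩ := h
  dsimp only at res len growth
  match w with
  | [] => exact ⟨res, len, growth⟩
  | a :: w =>
    by_cases hcond : ∀ p ∈ P, p < a
    · have hst : signStep n (c,P,Q,a::w) = (c+1, P++[a], Q++[c+1], w) := by
        simp only [signStep]; rw [if_pos hcond]
      rw [hst]
      constructor
      · simpa [List.append_assoc] using res
      · dsimp only; simp at len ⊢; omega
      · intro z hz
        dsimp only at hz ⊢
        have hz' : z ∈ P ++ a :: w := by
          simp only [List.mem_append, List.mem_cons, List.mem_singleton] at hz ⊢; tauto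
        refine (growth z hz').trans ?_
        have hmono : P.countP (fun p => decide (p < z)) ≤ (P ++ [a]).countP (fun p => decide (p < z)) := by
          simp [List.countP_append]
        have hn : (0:ℤ) ≤ (n:ℤ) := by positivity
        have : ((P.countP (fun p => decide (p < z)) : ℤ)) ≤ ((P ++ [a]).countP (fun p => decide (p < z)) : ℤ) := by
          exact_mod_cast hmono
        nlinarith
    · -- bump or stall
      cases hf : P.find? (fun p => decide (a < p)) with
      | none =>
        exfalso
        push_neg at hcond
        obtain ⟨p, hp, hpa⟩ := hcond
        have hnp : ¬ (a < p) := by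
          have := List.find?_eq_none.1 hf p hp
          simpa using this
        have : p = a := le_antisymm (not_lt.1 hnp) hpa
        subst this
        rw [List.pairwise_append] at res
        exact res.2.2 p hp p (List.mem_cons_self) rfl
      | some b =>
        have hab : a < b := by
          have := List.find?_some hf
          simpa using this
        obtain ⟨P₁, P₂, rfl, hP₁⟩ := find?_decomp _ P b hf
        have hst : signStep n (c,P₁++b::P₂,Q,a::w) =
            (c+1, (P₁++b::P₂).map (fun x => if x = b then a else x), Q, w ++ [(n:ℤ)+b]) := by
          simp only [signStep]; rw [if_neg hcond, hf]
        rw [hst]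
        have h1 : (P₁ ++ b :: P₂).Pairwise (fun x y : ℤ => (x : ZMod n) ≠ (y : ZMod n)) :=
          (List.pairwise_append.1 res).1
        have hbP₁ : ∀ x ∈ P₁, x ≠ b := fun x hx hxb =>
          ((List.pairwise_append.1 h1).2.2 x hx b (List.mem_cons_self)) (by rw [hxb])
        have hbP₂ : ∀ x ∈ P₂, x ≠ b := fun x hx hxb =>
          ((List.pairwise_cons.1 (List.pairwise_append.1 h1).2.1).1 x hx) (by rw [hxb])
        have hmap : (P₁++b::P₂).map (fun x => if x = b then a else x) = P₁ ++ a :: P₂ := by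
          rw [List.map_append, List.map_cons]
          congr 1
          · conv_rhs => rw [← List.map_id P₁]
            exact List.map_congr_left (fun x hx => by simp [hbP₁ x hx])
          · congr 1
            · simp
            · conv_rhs => rw [← List.map_id P₂]
              exact List.map_congr_left (fun x hx => by simp [hbP₂ x hx])
        rw [hmap]
        have keycnt : ∀ y : ℤ, (P₁ ++ a :: P₂).countP (fun p => decide (p < y)) =
            P₁.countP (fun p => decide (p < y)) + (if a < y then 1 else 0) + P₂.countP (fun p => decide (p < y)) := by
          intro y
          simp [List.countP_append, List.countP_cons]
          split_ifs <;> omega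
        have oldcnt : ∀ y : ℤ, (P₁ ++ b :: P₂).countP (fun p => decide (p < y)) =
            P₁.countP (fun p => decide (p < y)) + (if b < y then 1 else 0) + P₂.countP (fun p => decide (p < y)) := by
          intro y
          simp [List.countP_append, List.countP_cons]
          split_ifs <;> omega
        have hcnt_le : ∀ y : ℤ, (P₁ ++ b :: P₂).countP (fun p => decide (p < y)) ≤
            (P₁ ++ a :: P₂).countP (fun p => decide (p < y)) := by
          intro y
          rw [keycnt, oldcnt]
          by_cases hby : b < y
          · have : a < y := hab.trans hby
            simp [hby, this]
          · split_ifs <;> omega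
        have hn : (0:ℤ) ≤ (n:ℤ) := by positivity
        constructor
        · -- residues
          dsimp only
          have hperm : ((P₁ ++ a :: P₂) ++ (w ++ [(n:ℤ)+b])).Perm
              (P₁ ++ ((n:ℤ)+b) :: (P₂ ++ a :: w)) := perm_shuffle _ _ _ _ _
          refine (hperm.pairwise_iff (fun {x y} h => Ne.symm h)).2 ?_
          refine pairwise_middle_congr (fun x y h => Ne.symm h) (b := b)
            (fun x => by rw [cast_add_n]) ?_
          simpa [List.append_assoc] using res
        · dsimp only; simp at len ⊢; omega
        · intro z hz
          dsimp only at hz ⊢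
          simp only [List.mem_append, List.mem_cons, List.mem_singleton, List.not_mem_nil,
            or_false] at hz
          have key : ∀ y : ℤ, y ∈ (P₁ ++ b :: P₂) ++ a :: w →
              y ≤ M + ((P₁ ++ a :: P₂).countP (fun p => decide (p < y)) : ℤ) * n := by
            intro y hy
            refine (growth y hy).trans ?_
            have := hcnt_le y
            have : ((P₁ ++ b :: P₂).countP (fun p => decide (p < y)) : ℤ) ≤
                ((P₁ ++ a :: P₂).countP (fun p => decide (p < y)) : ℤ) := by exact_mod_cast this
            nlinarith
          rcases hz with (hz | rfl | hz) | hz | rfl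
          · exact key z (by simp [hz])
          · exact key z (by simp)
          · exact key z (by simp [hz])
          · exact key z (by simp [hz])
          · -- z = n + b : use bound for b, count gains at least one (the new a)
            have hold := growth b (by simp)
            rw [oldcnt] at hold
            simp only [lt_irrefl, if_false] at hold
            rw [keycnt]
            have ha1 : a < (n:ℤ) + b := by omega
            have hm₁ : P₁.countP (fun p => decide (p < b)) ≤ P₁.countP (fun p => decide (p < (n:ℤ)+b)) :=
              List.countP_mono_left (fun x hx hxb => by
                simp only [decide_eq_true_eq] at hxb ⊢; omega)
            have hm₂ : P₂.countP (fun p => decide (p < b)) ≤ P₂.countP (fun p => decide (p < (n:ℤ)+b)) :=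
              List.countP_mono_left (fun x hx hxb => by
                simp only [decide_eq_true_eq] at hxb ⊢; omega)
            simp only [ha1, if_true]
            have hc : (P₁.countP (fun p => decide (p < b)) + P₂.countP (fun p => decide (p < b)) + 1 : ℤ) ≤
                (P₁.countP (fun p => decide (p < (n:ℤ)+b)) + 1 + P₂.countP (fun p => decide (p < (n:ℤ)+b)) : ℤ) := by
              have : (P₁.countP (fun p => decide (p < b)) : ℤ) ≤ P₁.countP (fun p => decide (p < (n:ℤ)+b)) := by exact_mod_cast hm₁
              have : (P₂.countP (fun p => decide (p < b)) : ℤ) ≤ P₂.countP (fun p => decide (p < (n:ℤ)+b)) := by exact_mod_cast hm₂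
              omega
            push_cast at hold ⊢
            nlinarith

lemma RInv.iter (n : ℕ) (M : ℤ) (L : ℕ) (init : StT) (h : RInv n M L init) (T : ℕ) :
    RInv n M L ((signStep n)^[T] init) := by
  induction T with
  | zero => exact h
  | succ T ih => rw [Function.iterate_succ_apply']; exact ih.step _ _ _ _

lemma step_w_nil {n : ℕ} {s : StT} (h : s.2.2.2 = []) : signStep n s = s := by
  obtain ⟨c,P,Q,w⟩ := s
  dsimp only at h
  subst h
  rfl

lemma iter_stable {n : ℕ} (init : StT) (T U : ℕ) (hTU : T ≤ U)
    (h : ((signStep n)^[T] init).2.2.2 = []) :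
    (signStep n)^[U] init = (signStep n)^[T] init := by
  induction U with
  | zero =>
    have : T = 0 := by omega
    rw [this]
  | succ U ih =>
    rcases Nat.lt_or_ge T (U+1) with hT | hT
    · have hTU' : T ≤ U := by omega
      rw [Function.iterate_succ_apply', ih hTU']
      exact step_w_nil h
    · have : T = U + 1 := by omega
      rw [this]

/-- one step of an alive, stall-free state: counter increments, and `Q` gets `c+1`
appended exactly when the push condition holds. -/
lemma step_cQ {n : ℕ} {M : ℤ} {L : ℕ} {s : StT} (hI : RInv n M L s) {a : ℤ} {w' : List ℤ}
    (hw : s.2.2.2 = a :: w') :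
    (signStep n s).1 = s.1 + 1 ∧
    ((∀ p ∈ s.2.1, p < a) → (signStep n s).2.2.1 = s.2.2.1 ++ [s.1+1]) ∧
    (¬(∀ p ∈ s.2.1, p < a) → (signStep n s).2.2.1 = s.2.2.1) := by
  obtain ⟨c,P,Q,w⟩ := s
  dsimp only at hw
  subst hw
  by_cases hcond : ∀ p ∈ P, p < a
  · have hst : signStep n (c,P,Q,a::w') = (c+1, P++[a], Q++[c+1], w') := by
      simp only [signStep]; rw [if_pos hcond]
    rw [hst]
    exact ⟨rfl, fun _ => rfl, fun h => absurd hcond h⟩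
  · cases hf : P.find? (fun p => decide (a < p)) with
    | none =>
      exfalso
      push_neg at hcond
      obtain ⟨p, hp, hpa⟩ := hcond
      have hnp : ¬ (a < p) := by
        have := List.find?_eq_none.1 hf p hp
        simpa using this
      have : p = a := le_antisymm (not_lt.1 hnp) hpa
      subst this
      have res := hI.res
      rw [List.pairwise_append] at res
      exact res.2.2 p hp p (List.mem_cons_self) rfl
    | some b =>
      have hst : signStep n (c,P,Q,a::w') =
          (c+1, P.map (fun x => if x = b then a else x), Q, w' ++ [(n:ℤ)+b]) := by
        simp only [signStep]; rw [if_neg hcond, hf]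
      rw [hst]
      exact ⟨rfl, fun h => absurd h hcond, fun _ => rfl⟩

section trace
variable {n : ℕ} {M : ℤ} {L : ℕ} (init : StT)

lemma alive_down {n : ℕ} (init : StT) {T t : ℕ} (hT : ((signStep n)^[T] init).2.2.2 ≠ [])
    (ht : t ≤ T) : ((signStep n)^[t] init).2.2.2 ≠ [] := by
  intro h
  exact hT (by rw [iter_stable init t T ht h]; exact h)

lemma c_eq (hI : RInv n M L init) :
    ∀ T : ℕ, (∀ t < T, ((signStep n)^[t] init).2.2.2 ≠ []) →
    ((signStep n)^[T] init).1 = init.1 + T := by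
  intro T
  induction T with
  | zero => simp
  | succ T ih =>
    intro halive
    rw [Function.iterate_succ_apply']
    have hT := halive T (by omega)
    obtain ⟨a, w', hw⟩ : ∃ a w', ((signStep n)^[T] init).2.2.2 = a :: w' := by
      cases hwc : ((signStep n)^[T] init).2.2.2 with
      | nil => exact absurd hwc hT
      | cons a w' => exact ⟨a, w', rfl⟩
    have := (step_cQ (hI.iter n M L init T) hw).1
    rw [this, ih (fun t ht => halive t (by omega))]
    push_cast
    ring

lemma Q_mem (hI : RInv n M L init) (hc0 : init.1 = 0) (hQ0 : init.2.2.1 = []) :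
    ∀ T : ℕ, ∀ q : ℤ, q ∈ ((signStep n)^[T] init).2.2.1 ↔
      ∃ t, t < T ∧ ∃ a w', ((signStep n)^[t] init).2.2.2 = a :: w' ∧
        (∀ p ∈ ((signStep n)^[t] init).2.1, p < a) ∧ q = (t:ℤ)+1 := by
  intro T
  induction T with
  | zero =>
    intro q
    simp [hQ0]
  | succ T ih =>
    intro q
    rw [Function.iterate_succ_apply']
    cases hwc : ((signStep n)^[T] init).2.2.2 with
    | nil =>
      rw [step_w_nil hwc, ih]
      constructor
      · rintro ⟨t, ht, rest⟩
        exact ⟨t, by omega, rest⟩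
      · rintro ⟨t, ht, a, w', hw, rest⟩
        refine ⟨t, ?_, a, w', hw, rest⟩
        rcases Nat.lt_or_ge t T with h | h
        · exact h
        · exfalso
          have : t = T := by omega
          subst this
          rw [hwc] at hw
          exact nomatch hw
    | cons a w' =>
      have hIT := hI.iter n M L init T
      have hcT : ((signStep n)^[T] init).1 = (T : ℤ) := by
        have := c_eq init hI T (fun t ht => alive_down init (by rw [hwc]; simp) (by omega))
        rw [this, hc0]; ring
      obtain ⟨hc, hpush, hbump⟩ := step_cQ hIT hwc
      by_cases hcond : ∀ p ∈ ((signStep n)^[T] init).2.1, p < a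
      · rw [hpush hcond, hcT]
        simp only [List.mem_append, List.mem_singleton, ih]
        constructor
        · rintro (⟨t, ht, rest⟩ | rfl)
          · exact ⟨t, by omega, rest⟩
          · exact ⟨T, by omega, a, w', hwc, hcond, rfl⟩
        · rintro ⟨t, ht, b, w'', hw, hcond', rfl⟩
          rcases Nat.lt_or_ge t T with h | h
          · exact Or.inl ⟨t, h, b, w'', hw, hcond', rfl⟩
          · have : t = T := by omega
            subst this
            rw [hwc] at hw
            obtain ⟨rfl, rfl⟩ : a = b ∧ w' = w'' := by
              simpa using hw
            exact Or.inr rfl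
      · rw [hbump hcond, ih]
        constructor
        · rintro ⟨t, ht, rest⟩
          exact ⟨t, by omega, rest⟩
        · rintro ⟨t, ht, b, w'', hw, hcond', rfl⟩
          rcases Nat.lt_or_ge t T with h | h
          · exact ⟨t, h, b, w'', hw, hcond', rfl⟩
          · exfalso
            have : t = T := by omega
            subst this
            rw [hwc] at hw
            obtain ⟨rfl, rfl⟩ : a = b ∧ w' = w'' := by
              simpa using hw
            exact hcond hcond'

/-- A push happens at an alive time `t` iff `t+1` belongs to the final `Q`. -/
lemma push_char (hI : RInv n M L init) (hc0 : init.1 = 0) (hQ0 : init.2.2.1 = [])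
    {N : ℕ} (hN : ((signStep n)^[N] init).2.2.2 = [])
    {t : ℕ} {a : ℤ} {w' : List ℤ} (hw : ((signStep n)^[t] init).2.2.2 = a :: w') :
    ((∀ p ∈ ((signStep n)^[t] init).2.1, p < a) ↔
      ((t:ℤ)+1) ∈ ((signStep n)^[N] init).2.2.1) := by
  have htN : t < N := by
    rcases Nat.lt_or_ge t N with h | h
    · exact h
    · exfalso
      have := iter_stable init N t h hN
      rw [this, hN] at hw
      exact nomatch hw
  rw [Q_mem init hI hc0 hQ0]
  constructor
  · intro hcond
    exact ⟨t, htN, a, w', hw, hcond, rfl⟩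
  · rintro ⟨t', ht', b, w'', hw', hcond', heq⟩
    have : t' = t := by exact_mod_cast (by omega : (t':ℤ) = t)
    subst this
    rw [hw] at hw'
    obtain ⟨rfl, rfl⟩ : a = b ∧ w' = w'' := by
      simpa using hw'
    exact hcond'

end trace

/-! ### Abstract machine -/

abbrev Tag := ℕ × ℤ

def Lexlt (σ τ : Tag) : Prop := σ.1 < τ.1 ∨ (σ.1 = τ.1 ∧ σ.2 < τ.2)

instance : DecidableRel Lexlt := fun σ τ => by unfold Lexlt; infer_instance

lemma lexlt_trichotomy (σ τ : Tag) : Lexlt σ τ ∨ σ = τ ∨ Lexlt τ σ := by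
  obtain ⟨k, x⟩ := σ; obtain ⟨k', x'⟩ := τ
  unfold Lexlt
  simp only [Prod.mk.injEq]
  omega

def bumpT (τ : Tag) : Tag := (τ.1 + 1, τ.2)

def mergeW (val : Tag → ℤ) : List (Option Tag) → List ℤ → List ℤ
  | [], _ => []
  | some τ :: rest, s => val τ :: mergeW val rest s
  | none :: _, [] => []
  | none :: rest, a :: s => a :: mergeW val rest s

def cntN (pat : List (Option Tag)) : ℕ := pat.countP (fun o => o.isNone)

lemma cntN_nil : cntN [] = 0 := rfl
lemma cntN_cons_some (τ : Tag) (pat : List (Option Tag)) : cntN (some τ :: pat) = cntN pat := by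
  simp [cntN, List.countP_cons]
lemma cntN_cons_none (pat : List (Option Tag)) : cntN (none :: pat) = cntN pat + 1 := by
  simp [cntN, List.countP_cons]
lemma cntN_append_some (τ : Tag) (pat : List (Option Tag)) :
    cntN (pat ++ [some τ]) = cntN pat := by simp [cntN, List.countP_append, List.countP_cons]
lemma cntN_append_none (pat : List (Option Tag)) :
    cntN (pat ++ [none]) = cntN pat + 1 := by simp [cntN, List.countP_append, List.countP_cons]

lemma mergeW_append_some (val : Tag → ℤ) (τ : Tag) :
    ∀ (pat : List (Option Tag)) (s : List ℤ), cntN pat = s.length →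
    mergeW val (pat ++ [some τ]) s = mergeW val pat s ++ [val τ]
  | [], s, h => by
    have : s = [] := by
      rw [cntN_nil] at h
      exact (List.length_eq_zero_iff.1 h.symm)
    subst this
    rfl
  | some σ :: pat, s, h => by
    rw [cntN_cons_some] at h
    rw [List.cons_append]
    show val σ :: mergeW val (pat ++ [some τ]) s = _
    rw [mergeW_append_some val τ pat s h]
    rfl
  | none :: pat, s, h => by
    rw [cntN_cons_none] at h
    match s with
    | [] => simp at h
    | a :: s =>
      rw [List.cons_append]
      show a :: mergeW val (pat ++ [some τ]) s = _
      rw [mergeW_append_some val τ pat s (by simpa using h)]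
      rfl

lemma mergeW_append_none (val : Tag → ℤ) (b : ℤ) :
    ∀ (pat : List (Option Tag)) (s : List ℤ), cntN pat = s.length →
    mergeW val (pat ++ [none]) (s ++ [b]) = mergeW val (pat) s ++ [b]
  | [], s, h => by
    have : s = [] := by
      rw [cntN_nil] at h
      exact (List.length_eq_zero_iff.1 h.symm)
    subst this
    rfl
  | some σ :: pat, s, h => by
    rw [cntN_cons_some] at h
    rw [List.cons_append]
    show val σ :: mergeW val (pat ++ [none]) (s ++ [b]) = _
    rw [mergeW_append_none val b pat s h]
    rfl
  | none :: pat, s, h => by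
    rw [cntN_cons_none] at h
    match s with
    | [] => simp at h
    | a :: s =>
      rw [List.cons_append]
      show a :: mergeW val (pat ++ [none]) (s ++ [b]) = _
      rw [mergeW_append_none val b pat s (by simpa using h)]
      rfl

structure AState where
  c : ℤ
  Q : List ℤ
  t : ℕ
  pb : List Tag
  pat : List (Option Tag)

def Astep (d : ℕ → Bool) : AState → AState
  | ⟨c, Q, t, pb, []⟩ => ⟨c, Q, t, pb, []⟩
  | ⟨c, Q, t, pb, some τ :: rest⟩ =>
    if ∀ σ ∈ pb, Lexlt σ τ then ⟨c+1, Q++[c+1], t, pb++[τ], rest⟩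
    else match pb.find? (fun σ => decide (Lexlt τ σ)) with
      | some σ => ⟨c+1, Q, t, pb.map (fun ρ => if ρ = σ then τ else ρ), rest ++ [some (bumpT σ)]⟩
      | none => ⟨c, Q, t, pb, []⟩
  | ⟨c, Q, t, pb, none :: rest⟩ =>
    if d t then
      match pb with
      | [] => ⟨c+1, Q++[c+1], t+1, ([] : List Tag), rest⟩
      | σ :: pbrest => ⟨c+1, Q, t+1, pbrest, rest ++ [some (bumpT σ)]⟩
    else ⟨c+1, Q, t+1, pb, rest ++ [none]⟩

lemma signStep_pushP {n : ℕ} (s : StT) (a : ℤ) (w' : List ℤ) (hw : s.2.2.2 = a :: w')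
    (h : ∀ p ∈ s.2.1, p < a) :
    signStep n s = (s.1+1, s.2.1 ++ [a], s.2.2.1 ++ [s.1+1], w') := by
  obtain ⟨c,P,Q,w⟩ := s
  dsimp only at hw h ⊢
  subst hw
  simp only [signStep]
  rw [if_pos h]

lemma signStep_bumpP {n : ℕ} (s : StT) (a b : ℤ) (w' : List ℤ) (hw : s.2.2.2 = a :: w')
    (h : ¬ ∀ p ∈ s.2.1, p < a) (hf : s.2.1.find? (fun p => decide (a < p)) = some b) :
    signStep n s = (s.1+1, s.2.1.map (fun x => if x = b then a else x), s.2.2.1,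
      w' ++ [(n:ℤ)+b]) := by
  obtain ⟨c,P,Q,w⟩ := s
  dsimp only at hw h hf ⊢
  subst hw
  simp only [signStep]
  rw [if_neg h, hf]

lemma find?_congr' {α} {p q : α → Bool} : ∀ l : List α, (∀ x ∈ l, p x = q x) →
    l.find? p = l.find? q
  | [], _ => rfl
  | a :: l, h => by
    have ha := h a (List.mem_cons_self)
    by_cases hpa : p a
    · rw [List.find?_cons_of_pos hpa, List.find?_cons_of_pos (ha ▸ hpa)]
    · rw [List.find?_cons_of_neg hpa, List.find?_cons_of_neg (fun hq => hpa (ha ▸ hq)),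
        find?_congr' l (fun x hx => h x (List.mem_cons_of_mem _ hx))]

section sim

variable (n : ℕ) (val : Tag → ℤ) (X : Finset ℤ) (s : List ℤ)

def subSt (t : ℕ) : StT := (signStep n)^[t] ((0 : ℤ),([] : List ℤ),([] : List ℤ),s)

structure RealR (A : AState) (fs : StT) : Prop where
  hc : fs.1 = A.c
  hQ : fs.2.2.1 = A.Q
  hP : fs.2.1 = (subSt n s A.t).2.1 ++ A.pb.map val
  hw : fs.2.2.2 = mergeW val A.pat (subSt n s A.t).2.2.2
  hpbX : ∀ τ ∈ A.pb, τ.2 ∈ X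
  hpatX : ∀ o ∈ A.pat, ∀ τ : Tag, o = some τ → τ.2 ∈ X
  hcnt : cntN A.pat = (subSt n s A.t).2.2.2.length

variable {n val X s}

theorem RealR.step (d : ℕ → Bool) (A : AState) (fs : StT)
    (hval : ∀ τ : Tag, (n:ℤ) + val τ = val (bumpT τ))
    (hlex : ∀ σ τ : Tag, σ.2 ∈ X → τ.2 ∈ X → (val σ < val τ ↔ Lexlt σ τ))
    (hsb : ∀ t : ℕ, ∀ z ∈ (subSt n s t).2.1 ++ (subSt n s t).2.2.2, ∀ τ : Tag,
      τ.2 ∈ X → z < val τ)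
    (hd : ∀ t (a : ℤ) w', (subSt n s t).2.2.2 = a :: w' →
      ((∀ p ∈ (subSt n s t).2.1, p < a) ↔ d t = true))
    (hsubres : ∀ t, ((subSt n s t).2.1 ++ (subSt n s t).2.2.2).Pairwise
      (fun x y : ℤ => (x : ZMod n) ≠ (y : ZMod n)))
    (hfres : (fs.2.1 ++ fs.2.2.2).Pairwise (fun x y : ℤ => (x : ZMod n) ≠ (y : ZMod n)))
    (hR : RealR n val X s A fs) :
    RealR n val X s (Astep d A) (signStep n fs) := by
  obtain ⟨c, Q, t, pb, pat⟩ := A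
  obtain ⟨hc, hQ, hP, hw, hpbX, hpatX, hcnt⟩ := hR
  dsimp only at hc hQ hP hw hpbX hpatX hcnt
  match pat with
  | [] =>
    -- word empty in both machines
    have hsw : (subSt n s t).2.2.2 = [] := by
      rw [cntN_nil] at hcnt
      exact List.length_eq_zero_iff.1 hcnt.symm
    have hwnil : fs.2.2.2 = [] := by rw [hw, hsw]; rfl
    rw [step_w_nil hwnil]
    show RealR n val X s ⟨c,Q,t,pb,[]⟩ fs
    exact ⟨hc, hQ, hP, hw, hpbX, hpatX, hcnt⟩
  | some τ :: rest =>
    have hτX : τ.2 ∈ X := hpatX _ (List.mem_cons_self) τ rfl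
    have hwcons : fs.2.2.2 = val τ :: mergeW val rest (subSt n s t).2.2.2 := hw
    have hsmall : ∀ p ∈ (subSt n s t).2.1, p < val τ := fun p hp =>
      hsb t p (List.mem_append_left _ hp) τ hτX
    have hcnt' : cntN rest = (subSt n s t).2.2.2.length := by
      rw [cntN_cons_some] at hcnt; exact hcnt
    by_cases habs : ∀ σ ∈ pb, Lexlt σ τ
    · -- push in both machines
      have hcond : ∀ p ∈ fs.2.1, p < val τ := by
        rw [hP]
        intro p hp
        rcases List.mem_append.1 hp with hp | hp
        · exact hsmall p hp
        · obtain ⟨σ, hσ, rfl⟩ := List.mem_map.1 hp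
          exact (hlex σ τ (hpbX σ hσ) hτX).2 (habs σ hσ)
      rw [signStep_pushP fs (val τ) _ hwcons hcond]
      have hA : Astep d ⟨c,Q,t,pb,some τ :: rest⟩ = ⟨c+1, Q++[c+1], t, pb++[τ], rest⟩ := by
        simp only [Astep]; rw [if_pos habs]
      rw [hA]
      refine ⟨?_, ?_, ?_, ?_, ?_, ?_, ?_⟩
      · dsimp only; rw [hc]
      · dsimp only; rw [hQ, hc]
      · dsimp only; rw [hP, List.map_append, List.append_assoc]; rfl
      · rfl
      · intro σ hσ
        rcases List.mem_append.1 hσ with hσ | hσ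
        · exact hpbX σ hσ
        · rw [List.mem_singleton.1 hσ]; exact hτX
      · exact fun o ho τ' h => hpatX o (List.mem_cons_of_mem _ ho) τ' h
      · exact hcnt'
    · -- bump in both machines
      have hncond : ¬ ∀ p ∈ fs.2.1, p < val τ := by
        intro hcond
        apply habs
        intro σ hσ
        refine (hlex σ τ (hpbX σ hσ) hτX).1 ?_
        exact hcond (val σ) (by rw [hP]; exact List.mem_append_right _ (List.mem_map_of_mem hσ))
      have hfind : fs.2.1.find? (fun p => decide (val τ < p)) =
          Option.map val (pb.find? (fun σ => decide (Lexlt τ σ))) := by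
        rw [hP, List.find?_append]
        have h1 : (subSt n s t).2.1.find? (fun p => decide (val τ < p)) = none := by
          rw [List.find?_eq_none]
          intro p hp
          simp only [decide_eq_true_eq]
          exact not_lt.2 (le_of_lt (hsmall p hp))
        rw [h1, Option.none_or, List.find?_map]
        congr 1
        refine find?_congr' pb (fun σ hσ => ?_)
        simp only [Function.comp_apply]
        exact decide_eq_decide.2 (hlex τ σ hτX (hpbX σ hσ))
      cases hfa : pb.find? (fun σ => decide (Lexlt τ σ)) with
      | none =>
        -- impossible: some element of pb is neither < nor > τ, so equals τ;
        -- contradicts residue distinctness of fs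
        exfalso
        push_neg at habs
        obtain ⟨σ, hσ, hnlt⟩ := habs
        have hnlt' : ¬ Lexlt τ σ := by
          have := List.find?_eq_none.1 hfa σ hσ
          simpa using this
        have hστ : σ = τ := by
          rcases lexlt_trichotomy σ τ with h | h | h
          · exact absurd h hnlt
          · exact h
          · exact absurd h hnlt'
        subst hστ
        have hmemP : val σ ∈ fs.2.1 := by
          rw [hP]; exact List.mem_append_right _ (List.mem_map_of_mem hσ)
        have hmemw : val σ ∈ fs.2.2.2 := by rw [hwcons]; exact List.mem_cons_self
        exact (List.pairwise_append.1 hfres).2.2 _ hmemP _ hmemw rfl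
      | some σ₀ =>
        have hσ₀ : σ₀ ∈ pb := List.mem_of_find?_eq_some hfa
        have hσ₀X : σ₀.2 ∈ X := hpbX σ₀ hσ₀
        have hfind' : fs.2.1.find? (fun p => decide (val τ < p)) = some (val σ₀) := by
          rw [hfind, hfa]; rfl
        rw [signStep_bumpP fs (val τ) (val σ₀) _ hwcons hncond hfind']
        have hA : Astep d ⟨c,Q,t,pb,some τ :: rest⟩ =
            ⟨c+1, Q, t, pb.map (fun ρ => if ρ = σ₀ then τ else ρ),
              rest ++ [some (bumpT σ₀)]⟩ := by
          simp only [Astep]; rw [if_neg habs, hfa]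
        rw [hA]
        have hvalinj : ∀ ρ ∈ pb, ρ ≠ σ₀ → val ρ ≠ val σ₀ := by
          intro ρ hρ hne heq
          rcases lexlt_trichotomy ρ σ₀ with h | h | h
          · exact absurd heq (ne_of_lt ((hlex ρ σ₀ (hpbX ρ hρ) hσ₀X).2 h))
          · exact hne h
          · exact absurd heq.symm (ne_of_lt ((hlex σ₀ ρ hσ₀X (hpbX ρ hρ)).2 h))
        have hmapP : fs.2.1.map (fun x => if x = val σ₀ then val τ else x) =
            (subSt n s t).2.1 ++ (pb.map (fun ρ => if ρ = σ₀ then τ else ρ)).map val := by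
          rw [hP, List.map_append]
          congr 1
          · conv_rhs => rw [← List.map_id ((subSt n s t).2.1)]
            refine List.map_congr_left (fun x hx => ?_)
            have : x < val σ₀ := hsb t x (List.mem_append_left _ hx) σ₀ hσ₀X
            simp [ne_of_lt this]
          · rw [List.map_map, List.map_map]
            refine List.map_congr_left (fun ρ hρ => ?_)
            by_cases hρσ : ρ = σ₀
            · subst hρσ; simp
            · simp [Function.comp_apply, hvalinj ρ hρ hρσ, hρσ]
        refine ⟨?_, ?_, ?_, ?_, ?_, ?_, ?_⟩
        · dsimp only; rw [hc]
        · dsimp only; rw [hQ]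
        · dsimp only; rw [hmapP]
        · dsimp only
          rw [mergeW_append_some val _ rest _ hcnt', hval σ₀]
        · intro ρ hρ
          obtain ⟨ρ', hρ', rfl⟩ := List.mem_map.1 hρ
          by_cases h : ρ' = σ₀
          · simp only [h, if_pos rfl]; exact hτX
          · simp only [if_neg h]; exact hpbX ρ' hρ'
        · intro o ho τ' h
          rcases List.mem_append.1 ho with ho | ho
          · exact hpatX o (List.mem_cons_of_mem _ ho) τ' h
          · rw [List.mem_singleton.1 ho] at h
            obtain rfl : bumpT σ₀ = τ' := by injection h
            exact hσ₀X
        · rw [cntN_append_some]; exact hcnt'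
  | none :: rest =>
    obtain ⟨a, sw', hsw⟩ : ∃ a sw', (subSt n s t).2.2.2 = a :: sw' := by
      cases hswc : (subSt n s t).2.2.2 with
      | nil => rw [cntN_cons_none, hswc] at hcnt; simp at hcnt
      | cons a sw' => exact ⟨a, sw', rfl⟩
    have hwcons : fs.2.2.2 = a :: mergeW val rest sw' := by rw [hw, hsw]; rfl
    have hcnt' : cntN rest = sw'.length := by
      rw [cntN_cons_none, hsw] at hcnt; simpa using hcnt
    have hsmallbig : ∀ τ : Tag, τ.2 ∈ X → a < val τ := fun τ hτ =>
      hsb t a (List.mem_append_right _ (by rw [hsw]; exact List.mem_cons_self)) τ hτ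
    have hsubstep : subSt n s (t+1) = signStep n (subSt n s t) :=
      Function.iterate_succ_apply' _ _ _
    by_cases hdt : d t = true
    · -- sub-run pushes
      have hcond : ∀ p ∈ (subSt n s t).2.1, p < a := (hd t a sw' hsw).2 hdt
      have hsub' : subSt n s (t+1) = ((subSt n s t).1+1, (subSt n s t).2.1 ++ [a],
          (subSt n s t).2.2.1 ++ [(subSt n s t).1+1], sw') := by
        rw [hsubstep]; exact signStep_pushP _ a sw' hsw hcond
      match pb, hP, hpbX with
      | [], hP, hpbX =>
        -- full run pushes too
        have hfcond : ∀ p ∈ fs.2.1, p < a := by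
          rw [hP]
          simpa using hcond
        rw [signStep_pushP fs a _ hwcons hfcond]
        have hA : Astep d ⟨c,Q,t,[],none :: rest⟩ = ⟨c+1, Q++[c+1], t+1, [], rest⟩ := by
          simp only [Astep]; rw [if_pos hdt]
        rw [hA]
        refine ⟨?_, ?_, ?_, ?_, ?_, ?_, ?_⟩
        · dsimp only; rw [hc]
        · dsimp only; rw [hQ, hc]
        · dsimp only; rw [hP, hsub']; simp
        · dsimp only; rw [hsub']
        · simp
        · exact fun o ho τ' h => hpatX o (List.mem_cons_of_mem _ ho) τ' h
        · rw [hsub']; exact hcnt'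
      | σ₀ :: pbrest, hP, hpbX =>
        -- full run bumps the first big
        have hσ₀X : σ₀.2 ∈ X := hpbX σ₀ (List.mem_cons_self)
        have hncond : ¬ ∀ p ∈ fs.2.1, p < a := by
          intro hf
          have : val σ₀ < a := hf (val σ₀) (by
            rw [hP]; exact List.mem_append_right _ (by simp))
          exact absurd (hsmallbig σ₀ hσ₀X) (not_lt.2 (le_of_lt this))
        have hfind' : fs.2.1.find? (fun p => decide (a < p)) = some (val σ₀) := by
          rw [hP, List.find?_append]
          have h1 : (subSt n s t).2.1.find? (fun p => decide (a < p)) = none := by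
            rw [List.find?_eq_none]
            intro p hp
            simp only [decide_eq_true_eq]
            exact not_lt.2 (le_of_lt (hcond p hp))
          rw [h1, Option.none_or]
          rw [List.map_cons, List.find?_cons_of_pos]
          simp only [decide_eq_true_eq]
          exact hsmallbig σ₀ hσ₀X
        rw [signStep_bumpP fs a (val σ₀) _ hwcons hncond hfind']
        have hA : Astep d ⟨c,Q,t,σ₀ :: pbrest,none :: rest⟩ =
            ⟨c+1, Q, t+1, pbrest, rest ++ [some (bumpT σ₀)]⟩ := by
          simp only [Astep]; rw [if_pos hdt]
        rw [hA]
        -- distinctness of values in fs.2.1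
        have hPnd : fs.2.1.Pairwise (fun x y : ℤ => x ≠ y) := by
          refine ((List.pairwise_append.1 hfres).1).imp ?_
          intro x y h hxy
          exact h (by rw [hxy])
        have hPnd' : ((subSt n s t).2.1 ++ (σ₀ :: pbrest).map val).Pairwise
            (fun x y : ℤ => x ≠ y) := hP ▸ hPnd
        have hne2 : ∀ x ∈ pbrest.map val, x ≠ val σ₀ := by
          have h2 := (List.pairwise_append.1 hPnd').2.1
          rw [List.map_cons] at h2
          intro x hx hxx
          exact ((List.pairwise_cons.1 h2).1 x hx) hxx.symm
        have hmapP : fs.2.1.map (fun x => if x = val σ₀ then a else x) =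
            ((subSt n s t).2.1 ++ [a]) ++ pbrest.map val := by
          have e1 : ((subSt n s t).2.1).map (fun x => if x = val σ₀ then a else x) =
              (subSt n s t).2.1 := by
            conv_rhs => rw [← List.map_id ((subSt n s t).2.1)]
            refine List.map_congr_left (fun x hx => ?_)
            have : x < val σ₀ := hsb t x (List.mem_append_left _ hx) σ₀ hσ₀X
            simp [ne_of_lt this]
          have e2 : (pbrest.map val).map (fun x => if x = val σ₀ then a else x) =
              pbrest.map val := by
            conv_rhs => rw [← List.map_id (pbrest.map val)]
            refine List.map_congr_left (fun x hx => ?_)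
            simp [hne2 x hx]
          rw [hP, List.map_cons, List.map_append, List.map_cons, e1, e2,
            if_pos rfl, List.append_assoc]
          rfl
        rw [hmapP]
        refine ⟨?_, ?_, ?_, ?_, ?_, ?_, ?_⟩
        · dsimp only; rw [hc]
        · dsimp only; rw [hQ]
        · dsimp only; rw [hsub']
        · dsimp only
          rw [hsub', mergeW_append_some val _ rest _ hcnt', hval σ₀]
        · exact fun ρ hρ => hpbX ρ (List.mem_cons_of_mem _ hρ)
        · intro o ho τ' h
          rcases List.mem_append.1 ho with ho | ho
          · exact hpatX o (List.mem_cons_of_mem _ ho) τ' h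
          · rw [List.mem_singleton.1 ho] at h
            obtain rfl : bumpT σ₀ = τ' := by injection h
            exact hσ₀X
        · rw [cntN_append_some, hsub']; exact hcnt'
    · -- sub-run bumps
      have hdt' : d t = false := by
        cases h : d t
        · rfl
        · exact absurd h hdt
      have hncondsub : ¬ ∀ p ∈ (subSt n s t).2.1, p < a := fun h =>
        hdt ((hd t a sw' hsw).1 h)
      cases hfb : (subSt n s t).2.1.find? (fun p => decide (a < p)) with
      | none =>
        exfalso
        push_neg at hncondsub
        obtain ⟨p, hp, hpa⟩ := hncondsub
        have hnp : ¬ (a < p) := by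
          have := List.find?_eq_none.1 hfb p hp
          simpa using this
        have : p = a := le_antisymm (not_lt.1 hnp) hpa
        subst this
        have res := hsubres t
        rw [List.pairwise_append] at res
        exact res.2.2 p hp p (by rw [hsw]; exact List.mem_cons_self) rfl
      | some b =>
        have hb_mem : b ∈ (subSt n s t).2.1 := List.mem_of_find?_eq_some hfb
        have hsub' : subSt n s (t+1) = ((subSt n s t).1+1,
            (subSt n s t).2.1.map (fun x => if x = b then a else x),
            (subSt n s t).2.2.1, sw' ++ [(n:ℤ)+b]) := by
          rw [hsubstep]; exact signStep_bumpP _ a b sw' hsw hncondsub hfb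
        have hncondf : ¬ ∀ p ∈ fs.2.1, p < a := by
          intro hf
          push_neg at hncondsub
          obtain ⟨p, hp, hpa⟩ := hncondsub
          exact absurd (hf p (by rw [hP]; exact List.mem_append_left _ hp)) (not_lt.2 hpa)
        have hfindfull : fs.2.1.find? (fun p => decide (a < p)) = some b := by
          rw [hP, List.find?_append, hfb]
          rfl
        rw [signStep_bumpP fs a b _ hwcons hncondf hfindfull]
        have hA : Astep d ⟨c,Q,t,pb,none :: rest⟩ = ⟨c+1, Q, t+1, pb, rest ++ [none]⟩ := by
          simp only [Astep]; rw [hdt']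
          rfl
        rw [hA]
        have hmapP : fs.2.1.map (fun x => if x = b then a else x) =
            ((subSt n s t).2.1.map (fun x => if x = b then a else x)) ++ pb.map val := by
          rw [hP, List.map_append]
          congr 1
          conv_rhs => rw [← List.map_id (pb.map val)]
          refine List.map_congr_left (fun x hx => ?_)
          obtain ⟨ρ, hρ, rfl⟩ := List.mem_map.1 hx
          have : b < val ρ := hsb t b (List.mem_append_left _ hb_mem) ρ (hpbX ρ hρ)
          simp [(ne_of_lt this).symm]
        rw [hmapP]
        refine ⟨?_, ?_, ?_, ?_, ?_, ?_, ?_⟩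
        · dsimp only; rw [hc]
        · dsimp only; rw [hQ]
        · dsimp only; rw [hsub']
        · dsimp only
          rw [hsub', mergeW_append_none val _ rest _ hcnt']
        · exact hpbX
        · intro o ho τ' h
          rcases List.mem_append.1 ho with ho | ho
          · exact hpatX o (List.mem_cons_of_mem _ ho) τ' h
          · rw [List.mem_singleton.1 ho] at h
            exact absurd h (by simp)
        · rw [cntN_append_none, hsub']
          simp [hcnt']

lemma mergeW_eq_nil {val : Tag → ℤ} {pat : List (Option Tag)} {sw : List ℤ}
    (hcnt : cntN pat = sw.length) (h : mergeW val pat sw = []) :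
    pat = [] ∧ sw = [] := by
  match pat with
  | [] =>
    refine ⟨rfl, ?_⟩
    rw [cntN_nil] at hcnt
    exact List.length_eq_zero_iff.1 hcnt.symm
  | some τ :: rest => exact absurd h (by simp [mergeW])
  | none :: rest =>
    rw [cntN_cons_none] at hcnt
    match sw with
    | [] => simp at hcnt
    | a :: sw' => exact absurd h (by simp [mergeW])

theorem sim (n : ℕ) (val : Tag → ℤ) (X : Finset ℤ) (s : List ℤ) (d : ℕ → Bool)
    (pat₀ : List (Option Tag)) (l : List ℤ)
    (hval : ∀ τ : Tag, (n:ℤ) + val τ = val (bumpT τ))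
    (hlex : ∀ σ τ : Tag, σ.2 ∈ X → τ.2 ∈ X → (val σ < val τ ↔ Lexlt σ τ))
    (hsb : ∀ t : ℕ, ∀ z ∈ (subSt n s t).2.1 ++ (subSt n s t).2.2.2, ∀ τ : Tag,
      τ.2 ∈ X → z < val τ)
    (hd : ∀ t (a : ℤ) w', (subSt n s t).2.2.2 = a :: w' →
      ((∀ p ∈ (subSt n s t).2.1, p < a) ↔ d t = true))
    (hsubres : ∀ t, ((subSt n s t).2.1 ++ (subSt n s t).2.2.2).Pairwise
      (fun x y : ℤ => (x : ZMod n) ≠ (y : ZMod n)))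
    (hfres : ∀ T, (((signStep n)^[T] ((0:ℤ),([]:List ℤ),([]:List ℤ),l)).2.1 ++
      ((signStep n)^[T] ((0:ℤ),([]:List ℤ),([]:List ℤ),l)).2.2.2).Pairwise
      (fun x y : ℤ => (x : ZMod n) ≠ (y : ZMod n)))
    (hpat₀X : ∀ o ∈ pat₀, ∀ τ : Tag, o = some τ → τ.2 ∈ X)
    (hcnt₀ : cntN pat₀ = s.length)
    (hl : l = mergeW val pat₀ s) :
    ∀ T, RealR n val X s ((Astep d)^[T] ⟨0,[],0,[],pat₀⟩)
      ((signStep n)^[T] ((0:ℤ),([]:List ℤ),([]:List ℤ),l)) := by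
  intro T
  induction T with
  | zero =>
    exact ⟨rfl, rfl, rfl, hl, by simp, hpat₀X, hcnt₀⟩
  | succ T ih =>
    rw [Function.iterate_succ_apply', Function.iterate_succ_apply']
    exact RealR.step d _ _ hval hlex hsb hd hsubres (hfres T) ih

/-- any list has an upper bound -/
lemma exists_ub : ∀ l : List ℤ, ∃ M : ℤ, ∀ z ∈ l, z ≤ M
  | [] => ⟨0, by simp⟩
  | a :: l => by
    obtain ⟨M, hM⟩ := exists_ub l
    exact ⟨max a M, by
      intro z hz
      rcases List.mem_cons.1 hz with rfl | hz
      · exact le_max_left _ _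
      · exact (hM z hz).trans (le_max_right _ _)⟩

lemma subSt_nil (n : ℕ) (t : ℕ) : subSt n [] t = ((0:ℤ),([]:List ℤ),([]:List ℤ),([]:List ℤ)) := by
  induction t with
  | zero => rfl
  | succ t ih => rw [subSt, Function.iterate_succ_apply', ← subSt, ih]; rfl

section perm
variable {n : ℕ} (u : Equiv.Perm ℤ)

lemma per_mul (hper : ∀ i : ℤ, u (i + n) = u i + n) :
    ∀ (k : ℤ) (i : ℤ), u (i + k * n) = u i + k * n := by
  intro k
  induction k using Int.induction_on with
  | zero => simp
  | succ k ih =>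
    intro i
    have h1 : i + ((k : ℤ) + 1) * n = (i + k * n) + n := by ring
    rw [h1, hper, ih]
    ring
  | pred k ih =>
    intro i
    have h1 : i + (-(k : ℤ) - 1) * n + n = i + (-(k:ℤ)) * n := by ring
    have := hper (i + (-(k : ℤ) - 1) * n)
    rw [h1, ih] at this
    omega

lemma resid_inj (hper : ∀ i : ℤ, u (i + n) = u i + n) (hn : 0 < n) {x y : ℤ} (hx : x ∈ Finset.Icc (1:ℤ) (n:ℤ))
    (hy : y ∈ Finset.Icc (1:ℤ) (n:ℤ)) (h : ((u x : ℤ) : ZMod n) = ((u y : ℤ) : ZMod n)) :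
    x = y := by
  rw [ZMod.intCast_eq_intCast_iff] at h
  obtain ⟨k, hk⟩ := h.dvd
  have huy : u y = u x + k * n := by linarith [hk]
  rw [← per_mul u hper k x] at huy
  have hxy : y = x + k * n := u.injective huy
  simp only [Finset.mem_Icc] at hx hy
  rcases lt_trichotomy k 0 with hk0 | hk0 | hk0
  · exfalso
    have h1 : k * (n:ℤ) ≤ (-1) * n :=
      mul_le_mul_of_nonneg_right (by omega : k ≤ -1) (by positivity)
    nlinarith
  · subst hk0; omega
  · exfalso
    have h1 : (1:ℤ) * n ≤ k * n :=
      mul_le_mul_of_nonneg_right (by omega : (1:ℤ) ≤ k) (by positivity)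
    nlinarith

lemma map_res_pairwise (hper : ∀ i : ℤ, u (i + n) = u i + n) (hn : 0 < n) (L : List ℤ) (hL : L.Pairwise (fun x y : ℤ => x ≠ y))
    (hmem : ∀ x ∈ L, x ∈ Finset.Icc (1:ℤ) (n:ℤ)) :
    (L.map u).Pairwise (fun x y : ℤ => (x : ZMod n) ≠ (y : ZMod n)) := by
  rw [List.pairwise_map]
  refine hL.imp_of_mem ?_
  intro x y hx hy hxy h
  exact hxy (resid_inj u hper hn (hmem x hx) (hmem y hy) h)

end perm

section decomp
variable (u : ℤ → ℤ) (X : Finset ℤ) (val : Tag → ℤ)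

def tagger (y : ℤ) : Option Tag := if y ∈ X then some ((0:ℕ), y) else none

lemma mergeW_tagger (hval0 : ∀ y : ℤ, val (0, y) = u y) : ∀ L : List ℤ,
    mergeW val (L.map (tagger X)) ((L.filter (fun y => !decide (y ∈ X))).map u) = L.map u
  | [] => rfl
  | y :: L => by
    by_cases hy : y ∈ X
    · have h1 : tagger X y = some ((0:ℕ), y) := if_pos hy
      have h2 : (y :: L).filter (fun y => !decide (y ∈ X)) = L.filter (fun y => !decide (y ∈ X)) := by
        rw [List.filter_cons_of_neg]
        simp [hy]
      rw [List.map_cons, h1, h2]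
      show val (0, y) :: mergeW val (L.map (tagger X)) _ = _
      rw [mergeW_tagger hval0 L, hval0 y]
      rfl
    · have h1 : tagger X y = none := if_neg hy
      have h2 : (y :: L).filter (fun y => !decide (y ∈ X)) = y :: L.filter (fun y => !decide (y ∈ X)) := by
        rw [List.filter_cons_of_pos]
        simp [hy]
      rw [List.map_cons, h1, h2, List.map_cons]
      show u y :: mergeW val (L.map (tagger X)) _ = _
      rw [mergeW_tagger hval0 L]
      rfl

lemma cntN_tagger : ∀ L : List ℤ,
    cntN (L.map (tagger X)) = ((L.filter (fun y => !decide (y ∈ X))).map u).length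
  | [] => rfl
  | y :: L => by
    by_cases hy : y ∈ X
    · have h1 : tagger X y = some ((0:ℕ), y) := if_pos hy
      have h2 : (y :: L).filter (fun y => !decide (y ∈ X)) = L.filter (fun y => !decide (y ∈ X)) := by
        rw [List.filter_cons_of_neg]; simp [hy]
      rw [List.map_cons, h1, h2, cntN_cons_some]
      exact cntN_tagger L
    · have h1 : tagger X y = none := if_neg hy
      have h2 : (y :: L).filter (fun y => !decide (y ∈ X)) = y :: L.filter (fun y => !decide (y ∈ X)) := by
        rw [List.filter_cons_of_pos]; simp [hy]
      rw [List.map_cons, h1, h2, cntN_cons_none, List.map_cons, List.length_cons]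
      rw [cntN_tagger L]

lemma tagger_X (L : List ℤ) : ∀ o ∈ L.map (tagger X), ∀ τ : Tag, o = some τ → τ.2 ∈ X := by
  intro o ho τ h
  obtain ⟨y, _, rfl⟩ := List.mem_map.1 ho
  unfold tagger at h
  by_cases hy : y ∈ X
  · rw [if_pos hy] at h
    obtain rfl : ((0:ℕ), y) = τ := by injection h
    exact hy
  · rw [if_neg hy] at h
    exact absurd h (by simp)

end decomp

/-- lexicographic comparison of values -/
lemma val_lex_iff {n : ℕ} (hn : 0 < n) (u : ℤ → ℤ) (X : Finset ℤ)
    (hinc : ∀ x ∈ X, ∀ x' ∈ X, x < x' → u x < u x')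
    (hspan : ∀ x ∈ X, ∀ x' ∈ X, u x' < u x + n) :
    ∀ σ τ : Tag, σ.2 ∈ X → τ.2 ∈ X →
      ((u σ.2 + (σ.1 : ℤ) * n) < (u τ.2 + (τ.1 : ℤ) * n) ↔ Lexlt σ τ) := by
  rintro ⟨k, x⟩ ⟨k', x'⟩ hx hx'
  dsimp only
  unfold Lexlt
  dsimp only
  constructor
  · intro h
    rcases Nat.lt_trichotomy k k' with hk | hk | hk
    · exact Or.inl hk
    · subst hk
      have hxx : u x < u x' := by omega
      rcases lt_trichotomy x x' with h' | h' | h'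
      · exact Or.inr ⟨rfl, h'⟩
      · subst h'; omega
      · exact absurd (hinc x' hx' x hx h') (by omega)
    · exfalso
      have h1 : u x' < u x + n := hspan x hx x' hx'
      have h2 : (k' : ℤ) + 1 ≤ k := by exact_mod_cast hk
      have h3 : ((k' : ℤ) + 1) * n ≤ (k : ℤ) * n := mul_le_mul_of_nonneg_right h2 (by positivity)
      nlinarith
  · intro h
    rcases h with hk | ⟨hk, hx12⟩
    · have h1 : u x < u x' + n := hspan x' hx' x hx
      have h2 : (k : ℤ) + 1 ≤ k' := by exact_mod_cast hk
      have h3 : ((k : ℤ) + 1) * n ≤ (k' : ℤ) * n := mul_le_mul_of_nonneg_right h2 (by positivity)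
      nlinarith
    · subst hk
      have := hinc x hx x' hx' hx12
      omega

lemma exists_max : ∀ l : List ℤ, l ≠ [] → ∃ m ∈ l, ∀ a ∈ l, a ≤ m
  | [], h => absurd rfl h
  | a :: l, _ => by
    by_cases hl : l = []
    · subst hl
      exact ⟨a, List.mem_cons_self, by simp⟩
    · obtain ⟨m, hm, hub⟩ := exists_max l hl
      refine ⟨max a m, ?_, ?_⟩
      · rcases le_total a m with h | h
        · simp only [max_eq_right h]
          exact List.mem_cons_of_mem _ hm
        · simp only [max_eq_left h]
          exact List.mem_cons_self
      · intro z hz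
        rcases List.mem_cons.1 hz with rfl | hz
        · exact le_max_left _ _
        · exact (hub z hz).trans (le_max_right _ _)

section main

variable {n : ℕ} (hn : 0 < n) (X : Finset ℤ) (hX : X ⊆ Finset.Icc (1 : ℤ) (n : ℤ))

/-- the sorted window -/
noncomputable def Wl (n : ℕ) : List ℤ := ((Finset.Icc (1 : ℤ) (n : ℤ)).sort (· ≤ ·))

lemma Wl_mem {y : ℤ} (h : y ∈ Wl n) : y ∈ Finset.Icc (1 : ℤ) (n : ℤ) :=
  (Finset.mem_sort _).1 h

lemma Wl_length : (Wl n).length = n := by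
  rw [Wl, Finset.length_sort, Int.card_Icc]
  simp

lemma Wl_nodup : (Wl n).Pairwise (fun x y : ℤ => x ≠ y) := (Finset.sort_nodup _ _)

/-- prep: all SIM inputs for one permutation -/
lemma windowWord_full (u : Equiv.Perm ℤ) :
    windowWord n (Finset.Icc (1 : ℤ) (n : ℤ)) u = (Wl n).map u := by
  unfold windowWord
  rw [Wl, List.filter_eq_self.2]
  intro y hy
  simpa using (Finset.mem_sort _).1 hy

lemma windowWord_sub (u : Equiv.Perm ℤ) :
    windowWord n ((Finset.Icc (1 : ℤ) (n : ℤ)) \ X) u =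
      ((Wl n).filter (fun y => !decide (y ∈ X))).map u := by
  unfold windowWord
  rw [← Wl]
  congr 1
  refine List.filter_congr (fun y hy => ?_)
  have hyI : y ∈ Finset.Icc (1 : ℤ) (n : ℤ) := Wl_mem hy
  by_cases hyX : y ∈ X
  · simp [Finset.mem_sdiff, hyI, hyX]
  · simp [Finset.mem_sdiff, hyI, hyX]

end main

lemma stream_inc {n : ℕ} (u : ℤ → ℤ) (X : Finset ℤ)
    (hs : IsStream n (restrictedGraph n u X)) :
    ∀ x ∈ X, ∀ x' ∈ X, x < x' → u x < u x' := by
  intro x hx x' hx' hlt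
  exact hs.2.1 (x, u x) (x', u x')
    ⟨rfl, x, hx, 0, by ring⟩ ⟨rfl, x', hx', 0, by ring⟩ hlt

lemma stream_span {n : ℕ} (u : ℤ → ℤ) (hper : ∀ i : ℤ, u (i + n) = u i + n)
    (X : Finset ℤ) (hX : X ⊆ Finset.Icc (1 : ℤ) (n : ℤ))
    (hs : IsStream n (restrictedGraph n u X)) :
    ∀ x ∈ X, ∀ x' ∈ X, u x' < u x + n := by
  intro x hx x' hx'
  have hmem : ((x + (n:ℤ), u x + (n:ℤ)) : ℤ × ℤ) ∈ restrictedGraph n u X := by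
    refine ⟨?_, x, hx, 1, by ring⟩
    exact hper x
  have hx1 := Finset.mem_Icc.1 (hX hx)
  have hx'1 := Finset.mem_Icc.1 (hX hx')
  exact hs.2.1 (x', u x') (x + n, u x + n) ⟨rfl, x', hx', 0, by ring⟩ hmem (by omega)

theorem stmt18_aux (n : ℕ) (hn : 0 < n) (v w : Equiv.Perm ℤ)
    (hvper : ∀ i : ℤ, v (i + n) = v i + n)
    (hwper : ∀ i : ℤ, w (i + n) = w i + n)
    (X : Finset ℤ) (hX : X ⊆ Finset.Icc (1 : ℤ) (n : ℤ))
    (hsv : IsStream n (restrictedGraph n v X))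
    (hsw : IsStream n (restrictedGraph n w X))
    (hsepv : ∀ x ∈ X, ∀ y ∈ Finset.Icc (1 : ℤ) (n : ℤ), y ∉ X →
      v y + (n : ℤ) ^ 2 < v x)
    (hsepw : ∀ x ∈ X, ∀ y ∈ Finset.Icc (1 : ℤ) (n : ℤ), y ∉ X →
      w y + (n : ℤ) ^ 2 < w x)
    (hrest : SgnQEq n (windowWord n ((Finset.Icc (1 : ℤ) (n : ℤ)) \ X) v)
      (windowWord n ((Finset.Icc (1 : ℤ) (n : ℤ)) \ X) w)) :
    SgnQEq n (windowWord n (Finset.Icc (1 : ℤ) (n : ℤ)) v)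
      (windowWord n (Finset.Icc (1 : ℤ) (n : ℤ)) w) := by
  classical
  intro N M hNv hMw
  rw [windowWord_full v] at hNv ⊢
  rw [windowWord_full w] at hMw ⊢
  rw [windowWord_sub X v, windowWord_sub X w] at hrest
  -- notation
  set sv : List ℤ := ((Wl n).filter (fun y => !decide (y ∈ X))).map v with hsv_def
  set sw : List ℤ := ((Wl n).filter (fun y => !decide (y ∈ X))).map w with hsw_def
  set lv : List ℤ := (Wl n).map v with hlv_def
  set lw : List ℤ := (Wl n).map w with hlw_def
  set valv : Tag → ℤ := fun τ => v τ.2 + (τ.1 : ℤ) * n with hvalv_def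
  set valw : Tag → ℤ := fun τ => w τ.2 + (τ.1 : ℤ) * n with hvalw_def
  set pat₀ : List (Option Tag) := (Wl n).map (tagger X) with hpat_def
  -- generic facts, for each of v and w
  have hfilt_sub : ((Wl n).filter (fun y => !decide (y ∈ X))).Sublist (Wl n) :=
    List.filter_sublist
  have hfilt_nd : ((Wl n).filter (fun y => !decide (y ∈ X))).Pairwise (fun x y : ℤ => x ≠ y) :=
    (Wl_nodup).sublist hfilt_sub
  have hfilt_mem : ∀ y ∈ (Wl n).filter (fun y => !decide (y ∈ X)), y ∈ Finset.Icc (1:ℤ) (n:ℤ) :=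
    fun y hy => Wl_mem (List.mem_of_mem_filter hy)
  have hfilt_len : ((Wl n).filter (fun y => !decide (y ∈ X))).length ≤ n := by
    have := hfilt_sub.length_le
    rw [Wl_length] at this
    exact this
  -- bundle builder for one permutation
  have KEY : ∀ (u : Equiv.Perm ℤ), (∀ i : ℤ, u (i + n) = u i + n) →
      IsStream n (restrictedGraph n u X) →
      (∀ x ∈ X, ∀ y ∈ Finset.Icc (1 : ℤ) (n : ℤ), y ∉ X → u y + (n : ℤ) ^ 2 < u x) →
      (let valu : Tag → ℤ := fun τ => u τ.2 + (τ.1 : ℤ) * n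
       let su : List ℤ := ((Wl n).filter (fun y => !decide (y ∈ X))).map u
       let lu : List ℤ := (Wl n).map u
       (∀ τ : Tag, (n:ℤ) + valu τ = valu (bumpT τ)) ∧
       (∀ σ τ : Tag, σ.2 ∈ X → τ.2 ∈ X → (valu σ < valu τ ↔ Lexlt σ τ)) ∧
       (∀ t : ℕ, ∀ z ∈ (subSt n su t).2.1 ++ (subSt n su t).2.2.2, ∀ τ : Tag,
         τ.2 ∈ X → z < valu τ) ∧
       (∀ t, ((subSt n su t).2.1 ++ (subSt n su t).2.2.2).Pairwise
         (fun x y : ℤ => (x : ZMod n) ≠ (y : ZMod n))) ∧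
       (∀ T, (((signStep n)^[T] ((0:ℤ),([]:List ℤ),([]:List ℤ),lu)).2.1 ++
         ((signStep n)^[T] ((0:ℤ),([]:List ℤ),([]:List ℤ),lu)).2.2.2).Pairwise
         (fun x y : ℤ => (x : ZMod n) ≠ (y : ZMod n))) ∧
       (lu = mergeW valu pat₀ su) ∧
       (cntN pat₀ = su.length)) := by
    intro u hper hstream hsep
    intro valu su lu
    have hval0 : ∀ y : ℤ, valu (0, y) = u y := by
      intro y
      show u y + (((0:ℕ) : ℤ)) * n = u y
      simp
    have hsubres0 : su.Pairwise (fun x y : ℤ => (x : ZMod n) ≠ (y : ZMod n)) :=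
      map_res_pairwise u hper hn _ hfilt_nd hfilt_mem
    have hfres0 : lu.Pairwise (fun x y : ℤ => (x : ZMod n) ≠ (y : ZMod n)) :=
      map_res_pairwise u hper hn _ Wl_nodup (fun y hy => Wl_mem hy)
    obtain ⟨Ms, hMs⟩ := exists_ub su
    obtain ⟨Mf, hMf⟩ := exists_ub lu
    have hIs : RInv n Ms su.length ((0:ℤ),([]:List ℤ),([]:List ℤ),su) := by
      refine ⟨hsubres0, by simp, ?_⟩
      intro z hz
      simp only [List.nil_append] at hz
      simpa using hMs z hz
    have hIf : RInv n Mf lu.length ((0:ℤ),([]:List ℤ),([]:List ℤ),lu) := by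
      refine ⟨hfres0, by simp, ?_⟩
      intro z hz
      simp only [List.nil_append] at hz
      simpa using hMf z hz
    have hsubres : ∀ t, ((subSt n su t).2.1 ++ (subSt n su t).2.2.2).Pairwise
        (fun x y : ℤ => (x : ZMod n) ≠ (y : ZMod n)) := fun t =>
      (hIs.iter n Ms su.length _ t).res
    refine ⟨?_, ?_, ?_, hsubres, ?_, ?_, ?_⟩
    · intro τ
      show (n:ℤ) + (u τ.2 + (τ.1 : ℤ) * n) = u (bumpT τ).2 + (((bumpT τ).1 : ℕ) : ℤ) * n
      simp only [bumpT]
      push_cast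
      ring
    · exact val_lex_iff hn u X (stream_inc u X hstream) (stream_span u hper X hX hstream)
    · -- smalls stay below bigs
      intro t z hz τ hτ
      by_cases hsu : su = []
      · rw [hsu, subSt_nil] at hz
        simp at hz
      · obtain ⟨m, hm_mem, hm_ub⟩ := exists_max su hsu
        have hIm : RInv n m su.length ((0:ℤ),([]:List ℤ),([]:List ℤ),su) := by
          refine ⟨hsubres0, by simp, ?_⟩
          intro z hz
          simp only [List.nil_append] at hz
          simpa using hm_ub z hz
        have hIt := hIm.iter n m su.length ((0:ℤ),([]:List ℤ),([]:List ℤ),su) t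
        have hz' : z ∈ ((signStep n)^[t] ((0:ℤ),([]:List ℤ),([]:List ℤ),su)).2.1 ++
            ((signStep n)^[t] ((0:ℤ),([]:List ℤ),([]:List ℤ),su)).2.2.2 := hz
        have hgr := hIt.growth z hz'
        have hsulen : su.length ≤ n := by
          rw [show su = ((Wl n).filter (fun y => !decide (y ∈ X))).map u from rfl,
            List.length_map]
          exact hfilt_len
        have hcnt_le : (((signStep n)^[t] ((0:ℤ),([]:List ℤ),([]:List ℤ),su)).2.1.countP
            (fun p => decide (p < z))) ≤ n := by
          refine (List.countP_le_length).trans ?_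
          have hlen := hIt.len
          omega
        have hz_le : z ≤ m + (n:ℤ) * n := by
          have h1 : ((((signStep n)^[t] ((0:ℤ),([]:List ℤ),([]:List ℤ),su)).2.1.countP
              (fun p => decide (p < z))) : ℤ) ≤ (n:ℤ) := by
            exact_mod_cast hcnt_le
          have hn0 : (0:ℤ) ≤ (n:ℤ) := by positivity
          have h2 := hIt.growth z hz'
          nlinarith
        -- m = u y for some window y ∉ X
        obtain ⟨y, hyf, rfl⟩ := List.mem_map.1 hm_mem
        have hyI : y ∈ Finset.Icc (1:ℤ) (n:ℤ) := hfilt_mem y hyf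
        have hyX : y ∉ X := by
          have := (List.mem_filter.1 hyf).2
          simpa using this
        have hbig : u y + (n:ℤ)^2 < u τ.2 := hsep τ.2 hτ y hyI hyX
        have hτ1 : (0:ℤ) ≤ (τ.1 : ℤ) * n := by positivity
        show z < u τ.2 + (τ.1 : ℤ) * n
        nlinarith
    · exact fun T => ((hIf.iter n Mf lu.length _ T).res)
    · rw [hpat_def]
      exact (mergeW_tagger u X valu hval0 (Wl n)).symm
    · rw [hpat_def]
      exact cntN_tagger u X (Wl n)
  obtain ⟨hval_v, hlex_v, hsb_v, hsubres_v, hfres_v, hl_v, hcnt_v⟩ := KEY v hvper hsv hsepv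
  obtain ⟨hval_w, hlex_w, hsb_w, hsubres_w, hfres_w, hl_w, hcnt_w⟩ := KEY w hwper hsw hsepw
  have hpatX : ∀ o ∈ pat₀, ∀ τ : Tag, o = some τ → τ.2 ∈ X := by
    rw [hpat_def]; exact tagger_X X (Wl n)
  -- preliminary run to obtain termination of the sub-runs
  have PRELIM : ∀ (valu : Tag → ℤ) (su lu : List ℤ),
      (∀ τ : Tag, (n:ℤ) + valu τ = valu (bumpT τ)) →
      (∀ σ τ : Tag, σ.2 ∈ X → τ.2 ∈ X → (valu σ < valu τ ↔ Lexlt σ τ)) →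
      (∀ t : ℕ, ∀ z ∈ (subSt n su t).2.1 ++ (subSt n su t).2.2.2, ∀ τ : Tag,
        τ.2 ∈ X → z < valu τ) →
      (∀ t, ((subSt n su t).2.1 ++ (subSt n su t).2.2.2).Pairwise
        (fun x y : ℤ => (x : ZMod n) ≠ (y : ZMod n))) →
      (∀ T, (((signStep n)^[T] ((0:ℤ),([]:List ℤ),([]:List ℤ),lu)).2.1 ++
        ((signStep n)^[T] ((0:ℤ),([]:List ℤ),([]:List ℤ),lu)).2.2.2).Pairwise
        (fun x y : ℤ => (x : ZMod n) ≠ (y : ZMod n))) →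
      (lu = mergeW valu pat₀ su) →
      (cntN pat₀ = su.length) →
      ∀ T : ℕ, ((signStep n)^[T] ((0:ℤ),([]:List ℤ),([]:List ℤ),lu)).2.2.2 = [] →
      ∃ t : ℕ, (subSt n su t).2.2.2 = [] := by
    intro valu su lu hval hlex hsb hsubres hfres hl hcnt T hT
    set dpre : ℕ → Bool := fun t => ((subSt n su t).2.2.2.head?.elim true
      (fun a => decide (∀ p ∈ (subSt n su t).2.1, p < a))) with hdpre_def
    have hd : ∀ t (a : ℤ) w', (subSt n su t).2.2.2 = a :: w' →
        ((∀ p ∈ (subSt n su t).2.1, p < a) ↔ dpre t = true) := by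
      intro t a w' hw
      rw [hdpre_def]
      simp [hw]
    have hReal := sim n valu X su dpre pat₀ lu hval hlex hsb hd hsubres hfres hpatX hcnt hl T
    have hw := hReal.hw
    rw [hT] at hw
    obtain ⟨-, hsub⟩ := mergeW_eq_nil hReal.hcnt hw.symm
    exact ⟨_, hsub⟩
  obtain ⟨tN, htN⟩ := PRELIM valv sv lv hval_v hlex_v hsb_v hsubres_v hfres_v hl_v hcnt_v N hNv
  obtain ⟨tM, htM⟩ := PRELIM valw sw lw hval_w hlex_w hsb_w hsubres_w hfres_w hl_w hcnt_w M hMw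
  -- the common decision function
  have hQsub : ((signStep n)^[tN] ((0:ℤ),([]:List ℤ),([]:List ℤ),sv)).2.2.1 =
      ((signStep n)^[tM] ((0:ℤ),([]:List ℤ),([]:List ℤ),sw)).2.2.1 := hrest tN tM htN htM
  set d : ℕ → Bool := fun t => decide (((t:ℤ)+1) ∈
    ((signStep n)^[tN] ((0:ℤ),([]:List ℤ),([]:List ℤ),sv)).2.2.1) with hd_def
  obtain ⟨Msv, hMsv⟩ := exists_ub sv
  obtain ⟨Msw, hMsw⟩ := exists_ub sw
  have hIsv : RInv n Msv sv.length ((0:ℤ),([]:List ℤ),([]:List ℤ),sv) := by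
    refine ⟨hsubres_v 0, by simp, ?_⟩
    intro z hz
    simp only [List.nil_append] at hz
    simpa using hMsv z hz
  have hIsw : RInv n Msw sw.length ((0:ℤ),([]:List ℤ),([]:List ℤ),sw) := by
    refine ⟨hsubres_w 0, by simp, ?_⟩
    intro z hz
    simp only [List.nil_append] at hz
    simpa using hMsw z hz
  have hd_v : ∀ t (a : ℤ) w', (subSt n sv t).2.2.2 = a :: w' →
      ((∀ p ∈ (subSt n sv t).2.1, p < a) ↔ d t = true) := by
    intro t a w' hw
    rw [hd_def]
    simp only [subSt] at hw ⊢
    rw [push_char _ hIsv rfl rfl htN hw]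
    simp
  have hd_w : ∀ t (a : ℤ) w', (subSt n sw t).2.2.2 = a :: w' →
      ((∀ p ∈ (subSt n sw t).2.1, p < a) ↔ d t = true) := by
    intro t a w' hw
    rw [hd_def]
    simp only [subSt] at hw ⊢
    rw [push_char _ hIsw rfl rfl htM hw, ← hQsub]
    simp
  -- final simulation with the common d
  set T' : ℕ := max N M with hT'_def
  have hRv := sim n valv X sv d pat₀ lv hval_v hlex_v hsb_v hd_v hsubres_v hfres_v hpatX
    hcnt_v hl_v T'
  have hRw := sim n valw X sw d pat₀ lw hval_w hlex_w hsb_w hd_w hsubres_w hfres_w hpatX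
    hcnt_w hl_w T'
  have ev : (signStep n)^[T'] ((0:ℤ),([]:List ℤ),([]:List ℤ),lv) =
      (signStep n)^[N] ((0:ℤ),([]:List ℤ),([]:List ℤ),lv) :=
    iter_stable _ N T' (le_max_left _ _) hNv
  have ew : (signStep n)^[T'] ((0:ℤ),([]:List ℤ),([]:List ℤ),lw) =
      (signStep n)^[M] ((0:ℤ),([]:List ℤ),([]:List ℤ),lw) :=
    iter_stable _ M T' (le_max_right _ _) hMw
  have hv := hRv.hQ
  have hw' := hRw.hQ
  rw [ev] at hv
  rw [ew] at hw'
  rw [hv, hw']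

/-- If `v, w` are extended affine permutations whose restrictions to `X + nℤ`
are channels with values much larger than the remaining window values, the
relative orders of `{v (i n + x)}` and `{w (i n + x)}` (`i ∈ [0, n−1]`,
`x ∈ X`) coincide, and `sgn_𝔔` of the restrictions to `[1,n] − X` agree, then
`sgn_𝔔 v = sgn_𝔔 w`. -/
theorem stmt18 (n : ℕ) (hn : 0 < n) (v w : Equiv.Perm ℤ)
    (hvper : ∀ i : ℤ, v (i + n) = v i + n)
    (hwper : ∀ i : ℤ, w (i + n) = w i + n)
    (X : Finset ℤ) (hX : X ⊆ Finset.Icc (1 : ℤ) (n : ℤ))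
    (hchanv : IsChannel n {p : ℤ × ℤ | v p.1 = p.2} (restrictedGraph n v X))
    (hchanw : IsChannel n {p : ℤ × ℤ | w p.1 = p.2} (restrictedGraph n w X))
    (hsepv : ∀ x ∈ X, ∀ y ∈ Finset.Icc (1 : ℤ) (n : ℤ), y ∉ X →
      v y + (n : ℤ) ^ 2 < v x)
    (hsepw : ∀ x ∈ X, ∀ y ∈ Finset.Icc (1 : ℤ) (n : ℤ), y ∉ X →
      w y + (n : ℤ) ^ 2 < w x)
    (horder : ∀ i i' : ℤ, 0 ≤ i → i ≤ (n : ℤ) - 1 → 0 ≤ i' → i' ≤ (n : ℤ) - 1 →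
      ∀ x ∈ X, ∀ x' ∈ X,
        (v (i * n + x) ≤ v (i' * n + x') ↔ w (i * n + x) ≤ w (i' * n + x')))
    (hrest : SgnQEq n (windowWord n ((Finset.Icc (1 : ℤ) (n : ℤ)) \ X) v)
      (windowWord n ((Finset.Icc (1 : ℤ) (n : ℤ)) \ X) w)) :
    SgnQEq n (windowWord n (Finset.Icc (1 : ℤ) (n : ℤ)) v)
      (windowWord n (Finset.Icc (1 : ℤ) (n : ℤ)) w) := by
  exact stmt18_aux n hn v w hvper hwper X hX hchanv.1 hchanw.1 hsepv hsepw hrest
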